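/- The generalized spectral radius of the lifted family equals the 'periodic' constrained generalized spectral radius: ρ̄(𝒜_ℳ) = ρ̄^{per}(𝒜,ℳ). -/

import Mathlib

open Matrix Filter Kronecker

noncomputable section

/-- The product `A_{σ_{k-1}} ⋯ A_{σ_0}` for a word `σ = σ_0 … σ_{k-1}`. -/
def wordProd {m : ℕ} {N : Type*} [Fintype N] [DecidableEq N]
    (A : Fin m → Matrix N N ℝ) {k : ℕ} (σ : Fin k → Fin m) : Matrix N N ℝ :=
  ((List.ofFn fun i => A (σ i)).reverse).prod

/-- The spectral radius: maximal modulus of a complex eigenvalue. -/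
def specRad {N : Type*} [Fintype N] [DecidableEq N] (A : Matrix N N ℝ) : ℝ :=
  ⨆ μ ∈ ((A.map (Complex.ofReal ·)).charpoly.roots).toFinset, ‖μ‖

/-- `ν` is a sub-multiplicative matrix norm. -/
def IsSubmultNorm {N : Type*} [Fintype N] [DecidableEq N]
    (ν : Matrix N N ℝ → ℝ) : Prop :=
  (∀ S, 0 ≤ ν S) ∧ (∀ S, ν S = 0 ↔ S = 0) ∧
  (∀ (c : ℝ) (S), ν (c • S) = |c| * ν S) ∧
  (∀ S T, ν (S + T) ≤ ν S + ν T) ∧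
  (∀ S T, ν (S * T) ≤ ν S * ν T)

/-- Joint spectral radius. -/
def JSR {m : ℕ} {N : Type*} [Fintype N] [DecidableEq N]
    (ν : Matrix N N ℝ → ℝ) (A : Fin m → Matrix N N ℝ) : ℝ :=
  Filter.limsup
    (fun k : ℕ => (⨆ σ : Fin k → Fin m, ν (wordProd A σ)) ^ ((k : ℝ)⁻¹)) Filter.atTop

/-- Generalized spectral radius. -/
def GSR {m : ℕ} {N : Type*} [Fintype N] [DecidableEq N]
    (A : Fin m → Matrix N N ℝ) : ℝ :=
  Filter.limsup
    (fun k : ℕ => (⨆ σ : Fin k → Fin m, specRad (wordProd A σ)) ^ ((k : ℝ)⁻¹)) Filter.atTop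

/-- Constrained joint spectral radius. -/
def CJSR {n m ℓ : ℕ} (ν : Matrix (Fin n) (Fin n) ℝ → ℝ)
    (A : Fin m → Matrix (Fin n) (Fin n) ℝ)
    (F : Fin m → Matrix (Fin ℓ) (Fin ℓ) ℝ) : ℝ :=
  Filter.limsup
    (fun k : ℕ =>
      (⨆ σ : {σ : Fin k → Fin m // wordProd F σ ≠ 0}, ν (wordProd A σ.1)) ^ ((k : ℝ)⁻¹))
    Filter.atTop

/-- Constrained generalized spectral radius. -/
def CGSR {n m ℓ : ℕ}
    (A : Fin m → Matrix (Fin n) (Fin n) ℝ)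
    (F : Fin m → Matrix (Fin ℓ) (Fin ℓ) ℝ) : ℝ :=
  Filter.limsup
    (fun k : ℕ =>
      (⨆ σ : {σ : Fin k → Fin m // wordProd F σ ≠ 0}, specRad (wordProd A σ.1)) ^ ((k : ℝ)⁻¹))
    Filter.atTop

/-- The block norm `⦀S⦀ = max_j Σ_i ‖S_{ij}‖`. -/
def blockNorm {n ℓ : ℕ} (ν : Matrix (Fin n) (Fin n) ℝ → ℝ)
    (S : Matrix (Fin ℓ × Fin n) (Fin ℓ × Fin n) ℝ) : ℝ :=
  ⨆ j : Fin ℓ, ∑ i : Fin ℓ, ν (Matrix.of fun a b => S (i, a) (j, b))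

section aux
open Polynomial
variable {N : Type*} [Fintype N] [DecidableEq N]

/-- eval of charpoly -/
lemma charpoly_eval' {R : Type*} [CommRing R] (M : Matrix N N R) (μ : R) :
    M.charpoly.eval μ = (μ • (1 : Matrix N N R) - M).det := by
  rw [Matrix.charpoly, ← Polynomial.coe_evalRingHom, RingHom.map_det]
  congr 1
  ext i j
  by_cases h : i = j <;>
    simp [h, Matrix.charmatrix_apply, Matrix.map_apply, Matrix.sub_apply, Matrix.smul_apply,
      Matrix.one_apply, Matrix.diagonal_apply]

lemma exists_eigenvec_of_root (M : Matrix N N ℂ) {μ : ℂ} (h : μ ∈ M.charpoly.roots) :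
    ∃ v, v ≠ 0 ∧ M.mulVec v = μ • v := by
  have h0 : (μ • (1 : Matrix N N ℂ) - M).det = 0 := by
    rw [← charpoly_eval']
    exact (Polynomial.mem_roots (M.charpoly_monic.ne_zero)).1 h
  obtain ⟨v, hv, hv0⟩ := (Matrix.exists_mulVec_eq_zero_iff).2 h0
  refine ⟨v, hv, ?_⟩
  have := hv0
  rw [Matrix.sub_mulVec, Matrix.smul_mulVec, Matrix.one_mulVec, sub_eq_zero] at this
  exact this.symm

lemma root_of_eigenvec (M : Matrix N N ℂ) {μ : ℂ} {v : N → ℂ} (hv : v ≠ 0)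
    (h : M.mulVec v = μ • v) : μ ∈ M.charpoly.roots := by
  rw [Polynomial.mem_roots (M.charpoly_monic.ne_zero)]
  show M.charpoly.eval μ = 0
  rw [charpoly_eval']
  exact (Matrix.exists_mulVec_eq_zero_iff).1
    ⟨v, hv, by rw [Matrix.sub_mulVec, Matrix.smul_mulVec, Matrix.one_mulVec, h, sub_self]⟩

lemma eigen_pow (M : Matrix N N ℂ) {μ : ℂ} {v : N → ℂ} (h : M.mulVec v = μ • v) (k : ℕ) :
    (M ^ k).mulVec v = μ ^ k • v := by
  induction k with
  | zero => simp
  | succ k ih =>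
    rw [pow_succ', ← Matrix.mulVec_mulVec, ih, Matrix.mulVec_smul, h, smul_smul, ← pow_succ]

lemma roots_nonempty [Nonempty N] (M : Matrix N N ℂ) : M.charpoly.roots ≠ 0 := by
  have hc : M.charpoly.roots.card = Fintype.card N := by
    rw [← Matrix.charpoly_natDegree_eq_dim M]
    exact (Polynomial.splits_iff_card_roots.mp (IsAlgClosed.splits M.charpoly))
  intro h
  rw [h] at hc
  simp at hc
  exact (Fintype.card_ne_zero) hc.symm

section supFinset
variable (s : Finset ℂ) (f : ℂ → ℝ)

lemma biSup_finset_eq_max' (hf : ∀ x, 0 ≤ f x) :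
    (⨆ μ ∈ s, f μ) = (insert (0:ℝ) (s.image f)).max' ⟨0, Finset.mem_insert_self _ _⟩ := by
  set c := (insert (0:ℝ) (s.image f)).max' ⟨0, Finset.mem_insert_self _ _⟩ with hc
  have hub : ∀ μ : ℂ, (⨆ _ : μ ∈ s, f μ) ≤ c := by
    intro μ
    by_cases h : μ ∈ s
    · rw [ciSup_pos h]
      exact Finset.le_max' _ _ (Finset.mem_insert_of_mem (Finset.mem_image_of_mem f h))
    · simp only [h]
      rw [Real.iSup_of_isEmpty]
      exact Finset.le_max' _ _ (Finset.mem_insert_self _ _)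
  have hbdd : BddAbove (Set.range fun μ : ℂ => ⨆ _ : μ ∈ s, f μ) := by
    refine ⟨c, ?_⟩
    rintro x ⟨μ, rfl⟩
    exact hub μ
  apply le_antisymm
  · exact ciSup_le hub
  · apply Finset.max'_le
    intro y hy
    rcases Finset.mem_insert.1 hy with rfl | hy
    · obtain ⟨μ⟩ : Nonempty ℂ := inferInstance
      refine le_trans ?_ (le_ciSup hbdd μ)
      by_cases h : μ ∈ s
      · rw [ciSup_pos h]; exact hf μ
      · simp only [h]; rw [Real.iSup_of_isEmpty]
    · obtain ⟨μ, hμ, rfl⟩ := Finset.mem_image.1 hy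
      refine le_trans ?_ (le_ciSup hbdd μ)
      rw [ciSup_pos hμ]

lemma biSup_finset_nonneg (hf : ∀ x, 0 ≤ f x) : 0 ≤ ⨆ μ ∈ s, f μ := by
  rw [biSup_finset_eq_max' s f hf]
  exact Finset.le_max' _ _ (Finset.mem_insert_self _ _)

lemma le_biSup_finset (hf : ∀ x, 0 ≤ f x) {μ : ℂ} (h : μ ∈ s) : f μ ≤ ⨆ μ ∈ s, f μ := by
  rw [biSup_finset_eq_max' s f hf]
  exact Finset.le_max' _ _ (Finset.mem_insert_of_mem (Finset.mem_image_of_mem f h))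

lemma biSup_finset_le (hf : ∀ x, 0 ≤ f x) {c : ℝ} (hc : 0 ≤ c) (h : ∀ μ ∈ s, f μ ≤ c) : (⨆ μ ∈ s, f μ) ≤ c := by
  rw [biSup_finset_eq_max' s f hf]
  apply Finset.max'_le
  intro y hy
  rcases Finset.mem_insert.1 hy with rfl | hy
  · exact hc
  · obtain ⟨μ, hμ, rfl⟩ := Finset.mem_image.1 hy
    exact h μ hμ

lemma exists_biSup_finset_eq (hf : ∀ x, 0 ≤ f x) (hs : s.Nonempty) : ∃ μ ∈ s, f μ = ⨆ μ ∈ s, f μ := by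
  obtain ⟨μ0, hμ0, hmax⟩ := Finset.exists_max_image s f hs
  refine ⟨μ0, hμ0, le_antisymm (le_biSup_finset s f hf hμ0) ?_⟩
  exact biSup_finset_le s f hf (hf μ0) hmax

end supFinset

def specRadC (M : Matrix N N ℂ) : ℝ :=
  ⨆ μ ∈ M.charpoly.roots.toFinset, ‖μ‖

lemma specRadC_nonneg (M : Matrix N N ℂ) : 0 ≤ specRadC M :=
  biSup_finset_nonneg _ _ (fun x => norm_nonneg x)

lemma abs_le_specRadC (M : Matrix N N ℂ) {μ : ℂ} (h : μ ∈ M.charpoly.roots) :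
    ‖μ‖ ≤ specRadC M :=
  le_biSup_finset _ _ (fun x => norm_nonneg x) (Multiset.mem_toFinset.2 h)

lemma specRadC_le (M : Matrix N N ℂ) {c : ℝ} (hc : 0 ≤ c)
    (h : ∀ μ ∈ M.charpoly.roots, ‖μ‖ ≤ c) : specRadC M ≤ c :=
  biSup_finset_le _ _ (fun x => norm_nonneg x) hc
    (fun μ hμ => h μ (Multiset.mem_toFinset.1 hμ))

lemma exists_abs_eq_specRadC [Nonempty N] (M : Matrix N N ℂ) :
    ∃ μ ∈ M.charpoly.roots, ‖μ‖ = specRadC M := by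
  have hne : M.charpoly.roots.toFinset.Nonempty := by
    rw [Finset.nonempty_iff_ne_empty]
    intro h
    exact roots_nonempty M (by simpa using Multiset.toFinset_eq_empty.mp h)
  obtain ⟨μ, hμ, h⟩ := exists_biSup_finset_eq _ _ (fun x => norm_nonneg x) hne
  exact ⟨μ, Multiset.mem_toFinset.1 hμ, h⟩

/-- spectral mapping: eigenvalue of M^p is a p-th power of a root of charpoly of M -/
lemma exists_root_pow (M : Matrix N N ℂ) {p : ℕ} (hp : p ≠ 0) {c : ℂ} {v : N → ℂ}
    (hv : v ≠ 0) (h : (M ^ p).mulVec v = c • v) :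
    ∃ r ∈ M.charpoly.roots, r ^ p = c := by
  have hdet : (M ^ p - c • (1 : Matrix N N ℂ)).det = 0 := by
    apply (Matrix.exists_mulVec_eq_zero_iff).1
    exact ⟨v, hv, by rw [Matrix.sub_mulVec, Matrix.smul_mulVec, Matrix.one_mulVec, h,
      sub_self]⟩
  set q : Polynomial ℂ := Polynomial.X ^ p - Polynomial.C c with hq
  have hmonic : q.Monic := Polynomial.monic_X_pow_sub_C c hp
  have hsplit : q = (q.roots.map (fun r => Polynomial.X - Polynomial.C r)).prod :=
    (IsAlgClosed.splits q).eq_prod_roots_of_monic hmonic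
  have haeval : Polynomial.aeval M q = M ^ p - c • (1 : Matrix N N ℂ) := by
    rw [hq]
    simp [Algebra.algebraMap_eq_smul_one]
  set l : List ℂ := q.roots.toList with hl
  have hlprod : q = (l.map (fun r => Polynomial.X - Polynomial.C r)).prod := by
    conv_lhs => rw [hsplit]
    rw [hl]
    rw [show Multiset.map (fun r => Polynomial.X - Polynomial.C r) q.roots
        = ((q.roots.toList.map (fun r => Polynomial.X - Polynomial.C r) : List _) : Multiset _) from
      by rw [← Multiset.map_coe, Multiset.coe_toList], Multiset.prod_coe]
  have haeval2 : Polynomial.aeval M q =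
      (l.map (fun r => M - r • (1 : Matrix N N ℂ))).prod := by
    conv_lhs => rw [hlprod]
    rw [map_list_prod, List.map_map]
    congr 1
    apply List.map_congr_left
    intro r _
    simp [Algebra.algebraMap_eq_smul_one]
  have hdet2 : (l.map (fun r => (M - r • (1 : Matrix N N ℂ)).det)).prod = 0 := by
    have h2 : ((l.map (fun r => M - r • (1 : Matrix N N ℂ))).prod).det = 0 := by
      rw [← haeval2, haeval, hdet]
    calc (l.map (fun r => (M - r • (1 : Matrix N N ℂ)).det)).prod
        = ((l.map (fun r => M - r • (1 : Matrix N N ℂ))).prod).det := by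
          have h3 := (Matrix.detMonoidHom).map_list_prod (l.map (fun r => M - r • (1 : Matrix N N ℂ)))
          rw [List.map_map] at h3
          simpa [Matrix.coe_detMonoidHom, Function.comp_def] using h3.symm
      _ = 0 := h2
  obtain ⟨d, hd, hd0⟩ := by
    exact List.mem_map.1 ((List.prod_eq_zero_iff).1 hdet2)
  refine ⟨d, ?_, ?_⟩
  · rw [Polynomial.mem_roots (M.charpoly_monic.ne_zero)]
    show M.charpoly.eval d = 0
    rw [charpoly_eval', show d • (1 : Matrix N N ℂ) - M = -(M - d • (1 : Matrix N N ℂ)) from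
      (neg_sub _ _).symm, Matrix.det_neg, hd0, mul_zero]
  · have hroot : q.eval d = 0 := by
      have : d ∈ q.roots := (Multiset.mem_toList).1 (by rw [← hl]; exact hd)
      exact (Polynomial.mem_roots (hmonic.ne_zero)).1 this
    have hzz : d ^ p - c = 0 := by simpa [hq] using hroot
    exact sub_eq_zero.1 hzz

section kron
set_option linter.unusedSectionVars false
variable {L : Type*} [Fintype L] [DecidableEq L]

lemma kron_pow {R : Type*} [CommRing R] (M : Matrix L L R) (A : Matrix N N R) (k : ℕ) :
    (M ⊗ₖ A) ^ k = (M ^ k) ⊗ₖ (A ^ k) := by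
  induction k with
  | zero => simp [Matrix.one_kronecker_one]
  | succ k ih => rw [pow_succ, pow_succ, pow_succ, ih, Matrix.mul_kronecker_mul]

lemma kron_mulVec_tensor (M : Matrix L L ℂ) (A : Matrix N N ℂ) {μ ν : ℂ}
    {v : L → ℂ} {w : N → ℂ} (hv : M.mulVec v = μ • v) (hw : A.mulVec w = ν • w) :
    (M ⊗ₖ A).mulVec (fun p => v p.1 * w p.2) = (μ * ν) • (fun p => v p.1 * w p.2) := by
  funext p
  obtain ⟨i, j⟩ := p
  have hvi := congrFun hv i
  have hwj := congrFun hw j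
  simp only [Matrix.mulVec, dotProduct, Pi.smul_apply, smul_eq_mul] at hvi hwj ⊢
  calc (∑ p' : L × N, Matrix.kroneckerMap (· * ·) M A (i, j) p' * (v p'.1 * w p'.2))
      = ∑ i' : L, ∑ j' : N, (M i i' * v i') * (A j j' * w j') := by
        rw [Fintype.sum_prod_type]
        apply Finset.sum_congr rfl; intro i' _
        apply Finset.sum_congr rfl; intro j' _
        simp [Matrix.kroneckerMap_apply]; ring
    _ = (∑ i' : L, M i i' * v i') * (∑ j' : N, A j j' * w j') := by
        rw [Finset.sum_mul_sum]
    _ = (μ * ν) * (v i * w j) := by rw [hvi, hwj]; ring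

/-- reshape an eigenvector of a Kronecker product into a matrix relation -/
lemma reshape_eigen (M : Matrix L L ℂ) (A : Matrix N N ℂ) {lam : ℂ} {w : L × N → ℂ}
    (h : (M ⊗ₖ A).mulVec w = lam • w) :
    A * (Matrix.of fun (j : N) (i : L) => w (i, j)) * Mᵀ
      = lam • (Matrix.of fun (j : N) (i : L) => w (i, j)) := by
  ext j i
  have hw := congrFun h (i, j)
  simp only [Matrix.mulVec, dotProduct, Pi.smul_apply, smul_eq_mul] at hw
  rw [Fintype.sum_prod_type] at hw
  simp only [Matrix.smul_apply, Matrix.mul_apply, Matrix.of_apply, Matrix.transpose_apply,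
    smul_eq_mul]
  rw [← hw]
  apply Finset.sum_congr rfl; intro i' _
  rw [Finset.sum_mul]
  apply Finset.sum_congr rfl; intro j' _
  simp [Matrix.kroneckerMap_apply]; ring

lemma iterate_rel (M : Matrix L L ℂ) (A : Matrix N N ℂ) {lam : ℂ} {W : Matrix N L ℂ}
    (h : A * W * Mᵀ = lam • W) (k : ℕ) :
    (A ^ k) * W * (Mᵀ) ^ k = (lam ^ k) • W := by
  induction k with
  | zero => simp
  | succ k ih =>
    have : A ^ (k+1) * W * (Mᵀ) ^ (k+1) = A ^ k * (A * W * Mᵀ) * (Mᵀ) ^ k := by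
      show A ^ (k+1) * W * (Mᵀ) ^ (k+1) = A ^ k * (A * W * Mᵀ) * (Mᵀ) ^ k
      rw [pow_succ (A), pow_succ' (Mᵀ)]
      simp only [Matrix.mul_assoc]
    rw [this, h, Matrix.mul_smul, Matrix.smul_mul, ih, smul_smul, ← pow_succ']
end kron

section key
set_option linter.unusedSectionVars false
variable {L : Type*} [Fintype L] [DecidableEq L]

lemma vec_ne_zero_iff {α : Type*} {β : Type*} [Zero β] {v : α → β} :
    v ≠ 0 ↔ ∃ i, v i ≠ 0 := by
  rw [Function.ne_iff]; rfl

lemma key_le (Fc : Matrix L L ℂ) (Ac : Matrix N N ℂ)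
    (hF : ∃ a b : ℕ, a < b ∧ Fc ^ a = Fc ^ b) :
    ∀ lam ∈ (Fc ⊗ₖ Ac).charpoly.roots, ‖lam‖ ≤ specRadC Ac := by
  intro lam hlam
  by_cases h0 : lam = 0
  · simpa [h0] using specRadC_nonneg Ac
  obtain ⟨a, b, hab, hpow⟩ := hF
  set p := b - a with hp
  have hp0 : p ≠ 0 := Nat.sub_ne_zero_of_lt hab
  obtain ⟨w, hw0, hw⟩ := exists_eigenvec_of_root _ hlam
  set W : Matrix N L ℂ := Matrix.of fun (j : N) (i : L) => w (i, j) with hWdef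
  have hW0 : W ≠ 0 := by
    obtain ⟨⟨i0, j0⟩, hij⟩ := vec_ne_zero_iff.1 hw0
    intro hWe
    exact hij (by have := congrFun (congrFun hWe j0) i0; simpa [hWdef] using this)
  have hrel : Ac * W * Fcᵀ = lam • W := reshape_eigen Fc Ac hw
  set W' : Matrix N L ℂ := W * (Fcᵀ) ^ a with hW'def
  have ha : Ac ^ a * W' = lam ^ a • W := by
    rw [hW'def, ← Matrix.mul_assoc]
    exact iterate_rel Fc Ac hrel a
  have hW'0 : W' ≠ 0 := by
    have hlama : lam ^ a ≠ 0 := pow_ne_zero a h0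
    intro hWe
    rw [hWe, Matrix.mul_zero] at ha
    rcases smul_eq_zero.1 ha.symm with h | h
    · exact hlama h
    · exact hW0 h
  have hrel' : Ac * W' * Fcᵀ = lam • W' := by
    rw [hW'def]
    calc Ac * (W * Fcᵀ ^ a) * Fcᵀ = (Ac * W * Fcᵀ) * Fcᵀ ^ a := by
          simp only [Matrix.mul_assoc]
          rw [pow_mul_comm']
      _ = lam • (W * Fcᵀ ^ a) := by rw [hrel, Matrix.smul_mul]
  have hWq : W' * (Fcᵀ) ^ p = W' := by
    rw [hW'def, Matrix.mul_assoc, ← pow_add]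
    have : a + p = b := by omega
    rw [this, ← Matrix.transpose_pow, ← hpow, Matrix.transpose_pow]
  have hfin : Ac ^ p * W' = lam ^ p • W' := by
    have := iterate_rel Fc Ac hrel' p
    rwa [Matrix.mul_assoc, hWq] at this
  -- extract a nonzero column of W'
  obtain ⟨j0, i0, hji⟩ : ∃ j i, W' j i ≠ 0 := by
    by_contra hc
    push_neg at hc
    exact hW'0 (by ext j i; exact hc j i)
  set v : N → ℂ := fun j => W' j i0 with hvdef
  have hv0 : v ≠ 0 := vec_ne_zero_iff.2 ⟨j0, hji⟩
  have hev : (Ac ^ p).mulVec v = (lam ^ p) • v := by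
    funext j
    have := congrFun (congrFun hfin j) i0
    simpa [Matrix.mulVec, dotProduct, Matrix.mul_apply, hvdef] using this
  obtain ⟨r, hr, hrp⟩ := exists_root_pow (Ac) hp0 hv0 hev
  have habs : ‖r‖ ^ p = ‖lam‖ ^ p := by
    rw [← norm_pow, ← norm_pow, hrp]
  have : ‖lam‖ = ‖r‖ := by
    by_contra hne
    rcases lt_or_gt_of_ne hne with hlt | hgt
    · exact absurd habs (by
        have := pow_lt_pow_left₀ hlt (norm_nonneg lam) hp0
        linarith)
    · exact absurd habs (by
        have := pow_lt_pow_left₀ hgt (norm_nonneg r) hp0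
        linarith)
  rw [this]
  exact abs_le_specRadC Ac hr

end key

section key2
set_option linter.unusedSectionVars false
variable {L : Type*} [Fintype L] [DecidableEq L]

lemma specRadC_kron_eq [Nonempty L] [Nonempty N] (Fc : Matrix L L ℂ) (Ac : Matrix N N ℂ)
    (hF : ∃ a b : ℕ, a < b ∧ Fc ^ a = Fc ^ b) (h1 : specRadC Fc = 1) :
    specRadC (Fc ⊗ₖ Ac) = specRadC Ac := by
  apply le_antisymm
  · exact specRadC_le _ (specRadC_nonneg Ac) (key_le Fc Ac hF)
  · obtain ⟨μ, hμ, hμabs⟩ := exists_abs_eq_specRadC Fc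
    obtain ⟨ν, hν, hνabs⟩ := exists_abs_eq_specRadC Ac
    obtain ⟨v, hv0, hv⟩ := exists_eigenvec_of_root _ hμ
    obtain ⟨w, hw0, hw⟩ := exists_eigenvec_of_root _ hν
    have := kron_mulVec_tensor Fc Ac hv hw
    have htens : (fun p : L × N => v p.1 * w p.2) ≠ 0 := by
      obtain ⟨i0, hi0⟩ := vec_ne_zero_iff.1 hv0
      obtain ⟨j0, hj0⟩ := vec_ne_zero_iff.1 hw0
      exact vec_ne_zero_iff.2 ⟨(i0, j0), mul_ne_zero hi0 hj0⟩
    have hroot := root_of_eigenvec _ htens this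
    have := abs_le_specRadC _ hroot
    rw [norm_mul, hμabs, hνabs, h1, one_mul] at this
    exact this

lemma specRadC_kron_zero [Nonempty L] [Nonempty N] (Fc : Matrix L L ℂ) (Ac : Matrix N N ℂ)
    (h0 : specRadC Fc = 0) : specRadC (Fc ⊗ₖ Ac) = 0 := by
  -- Fc is nilpotent
  have hallz : ∀ μ ∈ Fc.charpoly.roots, μ = 0 := by
    intro μ hμ
    have h1 := abs_le_specRadC Fc hμ
    rw [h0] at h1
    have := norm_nonneg μ
    have : ‖μ‖ = 0 := le_antisymm h1 this
    exact norm_eq_zero.1 this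
  have hcp : Fc.charpoly = Polynomial.X ^ (Fintype.card L) := by
    have hsplit := (IsAlgClosed.splits Fc.charpoly).eq_prod_roots_of_monic
      Fc.charpoly_monic
    have hcard : Fc.charpoly.roots.card = Fintype.card L := by
      rw [← Matrix.charpoly_natDegree_eq_dim Fc]
      exact Polynomial.splits_iff_card_roots.mp (IsAlgClosed.splits Fc.charpoly)
    rw [hsplit]
    calc (Fc.charpoly.roots.map fun r => Polynomial.X - Polynomial.C r).prod
        = (Fc.charpoly.roots.map fun _ => (Polynomial.X : Polynomial ℂ)).prod := by
          congr 1
          apply Multiset.map_congr rfl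
          intro r hr
          rw [hallz r hr]
          simp
      _ = Polynomial.X ^ (Fintype.card L) := by
          rw [Multiset.map_const', Multiset.prod_replicate, hcard]
  have hnil : Fc ^ (Fintype.card L) = 0 := by
    have := Fc.aeval_self_charpoly
    rwa [hcp, map_pow, Polynomial.aeval_X] at this
  have hnil2 : (Fc ⊗ₖ Ac) ^ (Fintype.card L) = 0 := by
    rw [kron_pow, hnil, Matrix.zero_kronecker]
  apply le_antisymm
  · apply specRadC_le _ le_rfl
    intro μ hμ
    obtain ⟨v, hv0, hv⟩ := exists_eigenvec_of_root _ hμ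
    have := eigen_pow _ hv (Fintype.card L)
    rw [hnil2] at this
    have hμz : μ ^ (Fintype.card L) = 0 := by
      obtain ⟨i0, hi0⟩ := vec_ne_zero_iff.1 hv0
      have := congrFun this i0
      simp only [Matrix.zero_mulVec, Pi.zero_apply, Pi.smul_apply, smul_eq_mul] at this
      rcases mul_eq_zero.1 this.symm with h | h
      · exact h
      · exact absurd h hi0
    have hμ0 : μ = 0 := pow_eq_zero_iff (Fintype.card_ne_zero (α := L)) |>.1 hμz
    simp [hμ0]
  · exact specRadC_nonneg _

lemma specRadC_dichotomy [Nonempty L] (Fc : Matrix L L ℂ)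
    (hF : ∃ a b : ℕ, a < b ∧ Fc ^ a = Fc ^ b) :
    specRadC Fc = 0 ∨ specRadC Fc = 1 := by
  obtain ⟨a, b, hab, hpow⟩ := hF
  have hroots : ∀ μ ∈ Fc.charpoly.roots, ‖μ‖ = 0 ∨ ‖μ‖ = 1 := by
    intro μ hμ
    obtain ⟨v, hv0, hv⟩ := exists_eigenvec_of_root _ hμ
    have h1 := eigen_pow _ hv a
    have h2 := eigen_pow _ hv b
    rw [hpow] at h1
    rw [h1] at h2
    obtain ⟨i0, hi0⟩ := vec_ne_zero_iff.1 hv0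
    have h3 : μ ^ a = μ ^ b := by
      have := congrFun h2 i0
      simp only [Pi.smul_apply, smul_eq_mul] at this
      exact mul_right_cancel₀ hi0 this.symm |>.symm
    have h4 : ‖μ‖ ^ a = ‖μ‖ ^ b := by
      rw [← norm_pow, ← norm_pow, h3]
    set t := ‖μ‖ with ht
    have ht0 : 0 ≤ t := norm_nonneg μ
    rcases lt_trichotomy t 1 with hlt | heq | hgt
    · left
      by_contra htne
      have htpos : 0 < t := lt_of_le_of_ne ht0 (Ne.symm htne)
      have := pow_lt_pow_right_of_lt_one₀ htpos hlt hab
      linarith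
    · right; exact heq
    · exfalso
      have := pow_lt_pow_right₀ hgt hab
      linarith
  obtain ⟨μ0, hμ0, hμ0abs⟩ := exists_abs_eq_specRadC Fc
  rcases hroots μ0 hμ0 with h | h
  · left; rw [← hμ0abs, h]
  · right; rw [← hμ0abs, h]

end key2

lemma specRad_eq_specRadC {N : Type*} [Fintype N] [DecidableEq N] (A : Matrix N N ℝ) :
    specRad A = specRadC (A.map (Complex.ofReal ·)) := rfl

section real
set_option linter.unusedSectionVars false
variable {ℓ n : ℕ}

/-- sub-permutation matrices -/
def SubPerm (M : Matrix (Fin ℓ) (Fin ℓ) ℝ) : Prop :=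
  (∀ i j, M i j = 0 ∨ M i j = 1) ∧ ∀ t s s', M s t ≠ 0 → M s' t ≠ 0 → s = s'

lemma subPerm_one : SubPerm (1 : Matrix (Fin ℓ) (Fin ℓ) ℝ) := by
  constructor
  · intro i j
    by_cases h : i = j <;> simp [Matrix.one_apply, h]
  · intro t s s' hs hs'
    rw [Matrix.one_apply] at hs hs'
    by_cases h : s = t
    · by_cases h' : s' = t
      · rw [h, h']
      · simp [h'] at hs'
    · simp [h] at hs

lemma subPerm_mul {M P : Matrix (Fin ℓ) (Fin ℓ) ℝ} (hM : SubPerm M) (hP : SubPerm P) :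
    SubPerm (M * P) := by
  have hentry : ∀ s t, (M * P) s t = 0 ∨ ∃ r, P r t ≠ 0 ∧ (M * P) s t = M s r := by
    intro s t
    by_cases h : ∃ r, P r t ≠ 0
    · obtain ⟨r0, hr0⟩ := h
      right
      refine ⟨r0, hr0, ?_⟩
      rw [Matrix.mul_apply]
      rw [Finset.sum_eq_single r0]
      · rcases hP.1 r0 t with h | h
        · exact absurd h hr0
        · rw [h, mul_one]
      · intro r _ hr
        have : P r t = 0 := by
          by_contra hc
          exact hr (hP.2 t r r0 hc hr0)
        rw [this, mul_zero]
      · intro h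
        exact absurd (Finset.mem_univ r0) h
    · push_neg at h
      left
      rw [Matrix.mul_apply]
      apply Finset.sum_eq_zero
      intro r _
      rw [h r, mul_zero]
  constructor
  · intro s t
    rcases hentry s t with h | ⟨r, _, h⟩
    · left; exact h
    · rw [h]; exact hM.1 s r
  · intro t s s' hs hs'
    rcases hentry s t with h | ⟨r, hr, h⟩
    · exact absurd h hs
    rcases hentry s' t with h' | ⟨r', hr', h'⟩
    · exact absurd h' hs'
    have hrr : r = r' := hP.2 t r r' hr hr'
    rw [h] at hs
    rw [h', ← hrr] at hs'
    exact hM.2 r s s' hs hs'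

lemma subPerm_listProd : ∀ (lst : List (Matrix (Fin ℓ) (Fin ℓ) ℝ)),
    (∀ M ∈ lst, SubPerm M) → SubPerm lst.prod := by
  intro lst
  induction lst with
  | nil => intro _; simpa using subPerm_one
  | cons M rest ih =>
    intro h
    rw [List.prod_cons]
    exact subPerm_mul (h M (List.mem_cons_self)) (ih (fun P hP => h P (List.mem_cons_of_mem M hP)))

lemma subPerm_pow {M : Matrix (Fin ℓ) (Fin ℓ) ℝ} (hM : SubPerm M) (k : ℕ) : SubPerm (M ^ k) := by
  induction k with
  | zero => simpa using subPerm_one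
  | succ k ih => rw [pow_succ]; exact subPerm_mul ih hM

lemma subPerm_exists_pow_eq {M : Matrix (Fin ℓ) (Fin ℓ) ℝ} (hM : SubPerm M) :
    ∃ a b : ℕ, a < b ∧ M ^ a = M ^ b := by
  set g : ℕ → Fin ℓ → Fin ℓ → Bool := fun k i j => decide ((M ^ k) i j = 1) with hg
  obtain ⟨a, b, hne, heq⟩ := Finite.exists_ne_map_eq_of_infinite g
  have hpow : M ^ a = M ^ b := by
    ext i j
    have h1 := congrFun (congrFun heq i) j
    simp only [hg, decide_eq_decide] at h1
    rcases (subPerm_pow hM a).1 i j with ha | ha <;>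
      rcases (subPerm_pow hM b).1 i j with hb | hb <;>
      simp_all
  rcases hne.lt_or_gt with h | h
  · exact ⟨a, b, h, hpow⟩
  · exact ⟨b, a, h, hpow.symm⟩

end real

section bridge
set_option linter.unusedSectionVars false
variable {ℓ n : ℕ}

lemma mapC_mul {N : Type*} [Fintype N] [DecidableEq N] (M P : Matrix N N ℝ) :
    (M * P).map (Complex.ofReal ·) = M.map (Complex.ofReal ·) * P.map (Complex.ofReal ·) := by
  exact Matrix.map_mul (f := Complex.ofRealHom)

lemma mapC_pow {N : Type*} [Fintype N] [DecidableEq N] (M : Matrix N N ℝ) (k : ℕ) :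
    (M ^ k).map (Complex.ofReal ·) = (M.map (Complex.ofReal ·)) ^ k := by
  have := map_pow (Complex.ofRealHom.mapMatrix : Matrix N N ℝ →+* Matrix N N ℂ) M k
  simp only [RingHom.mapMatrix_apply] at this
  exact this

lemma mapC_kron (F : Matrix (Fin ℓ) (Fin ℓ) ℝ) (A : Matrix (Fin n) (Fin n) ℝ) :
    (F ⊗ₖ A).map (Complex.ofReal ·) = (F.map (Complex.ofReal ·)) ⊗ₖ (A.map (Complex.ofReal ·)) := by
  ext ⟨i, j⟩ ⟨i', j'⟩
  simp [Matrix.kroneckerMap_apply, Matrix.map_apply]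

lemma specRad_kron_one (hn : 0 < n) (hℓ : 0 < ℓ)
    {Fσ : Matrix (Fin ℓ) (Fin ℓ) ℝ} (hsub : SubPerm Fσ) (Aσ : Matrix (Fin n) (Fin n) ℝ)
    (h1 : specRad Fσ = 1) : specRad (Fσ ⊗ₖ Aσ) = specRad Aσ := by
  haveI : Nonempty (Fin ℓ) := ⟨⟨0, hℓ⟩⟩
  haveI : Nonempty (Fin n) := ⟨⟨0, hn⟩⟩
  rw [specRad_eq_specRadC, specRad_eq_specRadC, mapC_kron]
  apply specRadC_kron_eq
  · obtain ⟨a, b, hab, hpow⟩ := subPerm_exists_pow_eq hsub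
    exact ⟨a, b, hab, by rw [← mapC_pow, ← mapC_pow, hpow]⟩
  · rw [← specRad_eq_specRadC]; exact h1

lemma specRad_kron_zero' (hn : 0 < n) (hℓ : 0 < ℓ)
    {Fσ : Matrix (Fin ℓ) (Fin ℓ) ℝ} (Aσ : Matrix (Fin n) (Fin n) ℝ)
    (h0 : specRad Fσ = 0) : specRad (Fσ ⊗ₖ Aσ) = 0 := by
  haveI : Nonempty (Fin ℓ) := ⟨⟨0, hℓ⟩⟩
  haveI : Nonempty (Fin n) := ⟨⟨0, hn⟩⟩
  rw [specRad_eq_specRadC, mapC_kron]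
  apply specRadC_kron_zero
  rw [← specRad_eq_specRadC]; exact h0

lemma specRad_dichotomy (hℓ : 0 < ℓ) {Fσ : Matrix (Fin ℓ) (Fin ℓ) ℝ} (hsub : SubPerm Fσ) :
    specRad Fσ = 0 ∨ specRad Fσ = 1 := by
  haveI : Nonempty (Fin ℓ) := ⟨⟨0, hℓ⟩⟩
  rw [specRad_eq_specRadC]
  apply specRadC_dichotomy
  obtain ⟨a, b, hab, hpow⟩ := subPerm_exists_pow_eq hsub
  exact ⟨a, b, hab, by rw [← mapC_pow, ← mapC_pow, hpow]⟩

lemma specRad_nonneg {N : Type*} [Fintype N] [DecidableEq N] (A : Matrix N N ℝ) :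
    0 ≤ specRad A := by
  rw [specRad_eq_specRadC]; exact specRadC_nonneg _

lemma wordProd_eq_mapProd {m : ℕ} {N : Type*} [Fintype N] [DecidableEq N]
    (A : Fin m → Matrix N N ℝ) {k : ℕ} (σ : Fin k → Fin m) :
    wordProd A σ = (((List.ofFn σ).reverse).map A).prod := by
  rw [wordProd]
  congr 1
  rw [List.map_reverse]
  congr 1
  rw [List.map_ofFn]
  rfl

lemma listProd_kron {m ℓ n : ℕ} (F : Fin m → Matrix (Fin ℓ) (Fin ℓ) ℝ)
    (A : Fin m → Matrix (Fin n) (Fin n) ℝ) :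
    ∀ (lst : List (Fin m)),
      (lst.map fun i => F i ⊗ₖ A i).prod = (lst.map F).prod ⊗ₖ (lst.map A).prod := by
  intro lst
  induction lst with
  | nil => simp [Matrix.one_kronecker_one]
  | cons i rest ih =>
    simp only [List.map_cons, List.prod_cons, ih, Matrix.mul_kronecker_mul]

lemma wordProd_kron {m ℓ n : ℕ} (F : Fin m → Matrix (Fin ℓ) (Fin ℓ) ℝ)
    (A : Fin m → Matrix (Fin n) (Fin n) ℝ) {k : ℕ} (σ : Fin k → Fin m) :
    wordProd (fun i => F i ⊗ₖ A i) σ = wordProd F σ ⊗ₖ wordProd A σ := by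
  rw [wordProd_eq_mapProd, wordProd_eq_mapProd, wordProd_eq_mapProd, listProd_kron]

lemma subPerm_wordProd {m ℓ : ℕ} {F : Fin m → Matrix (Fin ℓ) (Fin ℓ) ℝ}
    (hF01 : ∀ i s t, F i s t = 0 ∨ F i s t = 1)
    (hFcol : ∀ i t s s', F i s t ≠ 0 → F i s' t ≠ 0 → s = s')
    {k : ℕ} (σ : Fin k → Fin m) : SubPerm (wordProd F σ) := by
  rw [wordProd_eq_mapProd]
  apply subPerm_listProd
  intro M hM
  obtain ⟨i, _, rfl⟩ := List.mem_map.1 hM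
  exact ⟨hF01 i, hFcol i⟩

end bridge

section main
variable {n m ℓ : ℕ}

lemma innerSup (hn : 0 < n) (hm : 0 < m) (hℓ : 0 < ℓ)
    (A : Fin m → Matrix (Fin n) (Fin n) ℝ)
    (F : Fin m → Matrix (Fin ℓ) (Fin ℓ) ℝ)
    (hF01 : ∀ i s t, F i s t = 0 ∨ F i s t = 1)
    (hFcol : ∀ i t s s', F i s t ≠ 0 → F i s' t ≠ 0 → s = s') (k : ℕ) :
    (⨆ σ : Fin k → Fin m, specRad (wordProd (fun i => F i ⊗ₖ A i) σ)) =
      ⨆ σ : {σ : Fin k → Fin m // specRad (wordProd F σ) = 1}, specRad (wordProd A σ.1) := by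
  haveI : Nonempty (Fin m) := ⟨⟨0, hm⟩⟩
  haveI : Nonempty (Fin k → Fin m) := ⟨fun _ => ⟨0, hm⟩⟩
  have hsub : ∀ σ : Fin k → Fin m, SubPerm (wordProd F σ) := subPerm_wordProd hF01 hFcol
  have hkron : ∀ σ : Fin k → Fin m,
      wordProd (fun i => F i ⊗ₖ A i) σ = wordProd F σ ⊗ₖ wordProd A σ := wordProd_kron F A
  by_cases hne : Nonempty {σ : Fin k → Fin m // specRad (wordProd F σ) = 1}
  · have hbdd1 : BddAbove (Set.range fun σ : Fin k → Fin m =>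
        specRad (wordProd (fun i => F i ⊗ₖ A i) σ)) := Set.Finite.bddAbove (Set.finite_range _)
    have hbdd2 : BddAbove (Set.range fun σ : {σ : Fin k → Fin m // specRad (wordProd F σ) = 1} =>
        specRad (wordProd A σ.1)) := Set.Finite.bddAbove (Set.finite_range _)
    apply le_antisymm
    · apply ciSup_le
      intro σ
      by_cases h1 : specRad (wordProd F σ) = 1
      · rw [hkron σ, specRad_kron_one hn hℓ (hsub σ) _ h1]
        exact le_ciSup hbdd2 (⟨σ, h1⟩ : {σ : Fin k → Fin m // specRad (wordProd F σ) = 1})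
      · have h0 : specRad (wordProd F σ) = 0 := by
          rcases specRad_dichotomy hℓ (hsub σ) with h | h
          · exact h
          · exact absurd h h1
        rw [hkron σ, specRad_kron_zero' hn hℓ _ h0]
        obtain ⟨τ⟩ := hne
        exact le_ciSup_of_le hbdd2 τ (specRad_nonneg _)
    · apply ciSup_le
      rintro ⟨σ, h1⟩
      rw [show specRad (wordProd A σ) = specRad (wordProd (fun i => F i ⊗ₖ A i) σ) from by
        rw [hkron σ, specRad_kron_one hn hℓ (hsub σ) _ h1]]
      exact le_ciSup hbdd1 σ
  · haveI := not_nonempty_iff.1 hne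
    conv_rhs => rw [Real.iSup_of_isEmpty]
    have hz : ∀ σ : Fin k → Fin m, specRad (wordProd (fun i => F i ⊗ₖ A i) σ) = 0 := by
      intro σ
      have h0 : specRad (wordProd F σ) = 0 := by
        rcases specRad_dichotomy hℓ (hsub σ) with h | h
        · exact h
        · exact absurd (⟨⟨σ, h⟩⟩ : Nonempty _) hne
      rw [hkron σ, specRad_kron_zero' hn hℓ _ h0]
    calc (⨆ σ : Fin k → Fin m, specRad (wordProd (fun i => F i ⊗ₖ A i) σ))
        = ⨆ _ : Fin k → Fin m, (0 : ℝ) := by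
          congr 1; funext σ; exact hz σ
      _ = 0 := ciSup_const

end main
end aux

theorem stmt3
    {n m ℓ : ℕ} (hn : 0 < n) (hm : 0 < m) (hℓ : 0 < ℓ)
    (A : Fin m → Matrix (Fin n) (Fin n) ℝ)
    (F : Fin m → Matrix (Fin ℓ) (Fin ℓ) ℝ)
    (hF01 : ∀ i s t, F i s t = 0 ∨ F i s t = 1)
    (hFcol : ∀ i t s s', F i s t ≠ 0 → F i s' t ≠ 0 → s = s') :
    GSR (fun i => F i ⊗ₖ A i) =
      Filter.limsup
        (fun k : ℕ =>
          (⨆ σ : {σ : Fin k → Fin m // specRad (wordProd F σ) = 1},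
            specRad (wordProd A σ.1)) ^ ((k : ℝ)⁻¹))
        Filter.atTop := by
  rw [GSR]
  congr 1
  funext k
  rw [innerSup hn hm hℓ A F hF01 hFcol k]

end
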